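/- Let H and H' be functional units for ℕ with H ≤ H'. If H' is computable, then H is computable. -/

import Mathlib

/-- Primitive instructions: plain basic `f.m`, positive test `+f.m`, negative test `-f.m`
(method names are natural numbers, there is a single focus `f`), forward jump `#l`,
backward jump `\l`, and the positive/negative termination instructions `!t` / `!f`. -/
inductive Instr : Type where
  | basic (m : ℕ)
  | postest (m : ℕ)
  | negtest (m : ℕ)
  | fjump (l : ℕ)
  | bjump (l : ℕ)
  | haltT
  | haltF
deriving DecidableEq

/-- A functional unit for a state space `S`: a finite, functional set of
(method name, method operation) pairs, where a method operation is a total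
function `S → Bool × S`. -/
structure FU (S : Type*) where
  carrier : Set (ℕ × (S → Bool × S))
  finite : carrier.Finite
  functional : ∀ {m : ℕ} {M M' : S → Bool × S},
    (m, M) ∈ carrier → (m, M') ∈ carrier → M = M'

/-- The interface of a functional unit: the set of method names occurring in it. -/
def FU.iface {S : Type*} (H : FU S) : Set ℕ := {m | ∃ M, (m, M) ∈ H.carrier}

/-- The method operation named `m` in `H` (an arbitrary fixed value if `m ∉ I(H)`). -/
noncomputable def FU.op {S : Type*} (H : FU S) (m : ℕ) (s : S) : Bool × S :=
  letI := Classical.propDecidable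
  if h : ∃ M, (m, M) ∈ H.carrier then h.choose s else (true, s)

/-- The restriction `⟨I, H⟩` of a functional unit to a set `I` of method names. -/
def FU.restrict {S : Type*} (H : FU S) (I : Set ℕ) : FU S where
  carrier := {p ∈ H.carrier | p.1 ∈ I}
  finite := H.finite.subset (Set.sep_subset _ _)
  functional := fun hM hM' => H.functional hM.1 hM'.1

/-- The method names used by an instruction all belong to `I`. -/
def Instr.namesIn (I : Set ℕ) : Instr → Prop
  | .basic m => m ∈ I
  | .postest m => m ∈ I
  | .negtest m => m ∈ I
  | _ => True

/-- An instruction sequence over a set `I` of method names: a finite nonempty list of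
primitive instructions whose method names belong to `I`. -/
def InstrSeqOver (I : Set ℕ) (x : List Instr) : Prop :=
  x ≠ [] ∧ ∀ u ∈ x, u.namesIn I

/-- `Exec H x i s b s'` : execution of the instruction sequence `x` on the functional
unit `H`, from (0-based) position `i` in state `s`, terminates delivering the Boolean
value `b` with final state `s'`.  (Position `i` here corresponds to the 1-based
position `i+1`; positions outside the sequence, jumps `#0`/`\0`, and infinite
executions admit no derivation, i.e. execution does not terminate.) -/
inductive Exec {S : Type*} (H : FU S) (x : List Instr) : ℕ → S → Bool → S → Prop where
  | basic {i : ℕ} {s : S} {b : Bool} {s' : S} (m : ℕ)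
      (hu : x[i]? = some (Instr.basic m))
      (h : Exec H x (i + 1) (H.op m s).2 b s') : Exec H x i s b s'
  | posT {i : ℕ} {s : S} {b : Bool} {s' : S} (m : ℕ)
      (hu : x[i]? = some (Instr.postest m)) (hr : (H.op m s).1 = true)
      (h : Exec H x (i + 1) (H.op m s).2 b s') : Exec H x i s b s'
  | posF {i : ℕ} {s : S} {b : Bool} {s' : S} (m : ℕ)
      (hu : x[i]? = some (Instr.postest m)) (hr : (H.op m s).1 = false)
      (h : Exec H x (i + 2) (H.op m s).2 b s') : Exec H x i s b s'
  | negT {i : ℕ} {s : S} {b : Bool} {s' : S} (m : ℕ)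
      (hu : x[i]? = some (Instr.negtest m)) (hr : (H.op m s).1 = true)
      (h : Exec H x (i + 2) (H.op m s).2 b s') : Exec H x i s b s'
  | negF {i : ℕ} {s : S} {b : Bool} {s' : S} (m : ℕ)
      (hu : x[i]? = some (Instr.negtest m)) (hr : (H.op m s).1 = false)
      (h : Exec H x (i + 1) (H.op m s).2 b s') : Exec H x i s b s'
  | fjump {i : ℕ} {s : S} {b : Bool} {s' : S} (l : ℕ)
      (hu : x[i]? = some (Instr.fjump l))
      (h : Exec H x (i + l) s b s') : Exec H x i s b s'
  | bjump {i : ℕ} {s : S} {b : Bool} {s' : S} (l : ℕ)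
      (hu : x[i]? = some (Instr.bjump l)) (hl : l ≤ i)
      (h : Exec H x (i - l) s b s') : Exec H x i s b s'
  | haltT {i : ℕ} {s : S} (hu : x[i]? = some Instr.haltT) : Exec H x i s true s
  | haltF {i : ℕ} {s : S} (hu : x[i]? = some Instr.haltF) : Exec H x i s false s

/-- `M` is a derived method operation of `H`: there is an instruction sequence `x`
over `I(H)` whose produced partial method operation `⌈x⌉_H` is total and equals `M`. -/
def DerivedOp {S : Type*} (H : FU S) (M : S → Bool × S) : Prop :=
  ∃ x : List Instr, InstrSeqOver H.iface x ∧ ∀ s, Exec H x 0 s (M s).1 (M s).2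

/-- `H ≤ H'` : every method operation of `H` is a derived method operation of `H'`. -/
def FU.le {S : Type*} (H H' : FU S) : Prop :=
  ∀ m M, (m, M) ∈ H.carrier → DerivedOp H' M

/-- `H ≡ H'` : `H ≤ H'` and `H' ≤ H`. -/
def FU.equiv {S : Type*} (H H' : FU S) : Prop := FU.le H H' ∧ FU.le H' H

/-- A method operation on ℕ is computable if both its components are. -/
def ComputableMO (M : ℕ → Bool × ℕ) : Prop :=
  Computable (fun n => (M n).1) ∧ Computable (fun n => (M n).2)

/-- A functional unit for ℕ is computable if all its method operations are. -/
def ComputableFU (H : FU ℕ) : Prop :=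
  ∀ m M, (m, M) ∈ H.carrier → ComputableMO M

/-- One step of execution of a single instruction at position `i`:
`Sum.inl` is a final result, `Sum.inr` is the next (position, state). -/
def instrStep (op : ℕ → ℕ → Bool × ℕ) (i : ℕ) : Instr → ℕ → (Bool × ℕ) ⊕ (ℕ × ℕ)
  | .basic m, s => .inr (i + 1, (op m s).2)
  | .postest m, s => cond (op m s).1 (.inr (i + 1, (op m s).2)) (.inr (i + 2, (op m s).2))
  | .negtest m, s => cond (op m s).1 (.inr (i + 2, (op m s).2)) (.inr (i + 1, (op m s).2))
  | .fjump l, s => .inr (i + l, s)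
  | .bjump l, s => if l ≤ i then .inr (i - l, s) else .inr (i, s)
  | .haltT, s => .inl (true, s)
  | .haltF, s => .inl (false, s)

/-- Dispatch on the instruction at position `i`. -/
def seqStepG (x : List Instr) (op : ℕ → ℕ → Bool × ℕ) (i s : ℕ) : (Bool × ℕ) ⊕ (ℕ × ℕ) :=
  match x[i]? with
  | some u => instrStep op i u s
  | none => .inr (i, s)

/-- The one-step transition function of the whole instruction sequence. -/
def seqStep (x : List Instr) (op : ℕ → ℕ → Bool × ℕ) (p : ℕ × ℕ) : (Bool × ℕ) ⊕ (ℕ × ℕ) :=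
  if p.1 ∈ List.range x.length then seqStepG x op p.1 p.2 else .inr p

theorem compListCase {α : Type} [Primcodable α] (L : List ℕ) (g : ℕ → ℕ → α) (d : ℕ × ℕ → α)
    (hg : ∀ i ∈ L, Computable (g i)) (hd : Computable d) :
    Computable (fun p : ℕ × ℕ => if p.1 ∈ L then g p.1 p.2 else d p) := by
  induction L with
  | nil => simpa using hd
  | cons a L ih =>
    have h2 := ih fun i hi => hg i (List.mem_cons_of_mem _ hi)
    have heq : (fun p : ℕ × ℕ => if p.1 ∈ a :: L then g p.1 p.2 else d p)
        = fun p : ℕ × ℕ => cond (decide (p.1 = a)) (g a p.2)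
            (if p.1 ∈ L then g p.1 p.2 else d p) := by
      funext p
      by_cases hpa : p.1 = a <;> simp [hpa, List.mem_cons]
    rw [heq]
    exact Computable.cond
      ((Primrec.eq.comp Primrec.fst (Primrec.const a)).decide.to_comp)
      ((hg a (List.mem_cons_self)).comp Computable.snd) h2

theorem seqStep_computable (x : List Instr) (op : ℕ → ℕ → Bool × ℕ)
    (hop : ∀ u ∈ x, ∀ m, (u = Instr.basic m ∨ u = Instr.postest m ∨ u = Instr.negtest m) →
      Computable (op m)) :
    Computable (seqStep x op) := by
  unfold seqStep
  refine compListCase _ (seqStepG x op) Sum.inr ?_ Computable.sumInr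
  · intro i hi
    rw [List.mem_range] at hi
    obtain ⟨u, hu⟩ : ∃ u, x[i]? = some u := ⟨x[i], List.getElem?_eq_some_iff.mpr ⟨hi, rfl⟩⟩
    have hum : u ∈ x := List.mem_of_getElem? hu
    have heq : seqStepG x op i = fun s => instrStep op i u s := by
      funext s; rw [seqStepG, hu]
    rw [heq]
    cases u with
    | basic m =>
      have hm := hop _ hum m (Or.inl rfl)
      exact Computable.sumInr.comp
        ((Computable.const (i+1)).pair (Computable.snd.comp hm))
    | postest m =>
      have hm := hop _ hum m (Or.inr (Or.inl rfl))
      exact Computable.cond (Computable.fst.comp hm)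
        (Computable.sumInr.comp ((Computable.const (i+1)).pair (Computable.snd.comp hm)))
        (Computable.sumInr.comp ((Computable.const (i+2)).pair (Computable.snd.comp hm)))
    | negtest m =>
      have hm := hop _ hum m (Or.inr (Or.inr rfl))
      exact Computable.cond (Computable.fst.comp hm)
        (Computable.sumInr.comp ((Computable.const (i+2)).pair (Computable.snd.comp hm)))
        (Computable.sumInr.comp ((Computable.const (i+1)).pair (Computable.snd.comp hm)))
    | fjump l =>
      exact Computable.sumInr.comp ((Computable.const (i+l)).pair Computable.id)
    | bjump l =>
      by_cases hl : l ≤ i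
      · have heq2 : (fun s => instrStep op i (Instr.bjump l) s)
            = fun s => Sum.inr ((i - l, s) : ℕ × ℕ) := by
          funext s; simp [instrStep, hl]
        rw [heq2]
        exact Computable.sumInr.comp ((Computable.const (i-l)).pair Computable.id)
      · have heq2 : (fun s => instrStep op i (Instr.bjump l) s)
            = fun s => Sum.inr ((i, s) : ℕ × ℕ) := by
          funext s; simp [instrStep, hl]
        rw [heq2]
        exact Computable.sumInr.comp ((Computable.const i).pair Computable.id)
    | haltT =>
      exact Computable.sumInl.comp ((Computable.const true).pair Computable.id)
    | haltF =>
      exact Computable.sumInl.comp ((Computable.const false).pair Computable.id)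

theorem exec_fix {H : FU ℕ} {x : List Instr} {i : ℕ} {s : ℕ} {b : Bool} {s' : ℕ}
    (h : Exec H x i s b s') :
    (b, s') ∈ PFun.fix (fun p => Part.some (seqStep x H.op p)) (i, s) := by
  induction h with
  | basic m hu h ih =>
    rename_i i s b s'
    have hi : i < x.length := (List.getElem?_eq_some_iff.mp hu).1
    rw [PFun.fix_fwd_eq (f := fun p => Part.some (seqStep x H.op p)) (a' := (i + 1, (H.op m s).2))
      (by simp [seqStep, seqStepG, List.mem_range.mpr hi, hu, instrStep])]
    exact ih
  | posT m hu hr h ih =>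
    rename_i i s b s'
    have hi : i < x.length := (List.getElem?_eq_some_iff.mp hu).1
    rw [PFun.fix_fwd_eq (f := fun p => Part.some (seqStep x H.op p)) (a' := (i + 1, (H.op m s).2))
      (by simp [seqStep, seqStepG, List.mem_range.mpr hi, hu, instrStep, hr])]
    exact ih
  | posF m hu hr h ih =>
    rename_i i s b s'
    have hi : i < x.length := (List.getElem?_eq_some_iff.mp hu).1
    rw [PFun.fix_fwd_eq (f := fun p => Part.some (seqStep x H.op p)) (a' := (i + 2, (H.op m s).2))
      (by simp [seqStep, seqStepG, List.mem_range.mpr hi, hu, instrStep, hr])]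
    exact ih
  | negT m hu hr h ih =>
    rename_i i s b s'
    have hi : i < x.length := (List.getElem?_eq_some_iff.mp hu).1
    rw [PFun.fix_fwd_eq (f := fun p => Part.some (seqStep x H.op p)) (a' := (i + 2, (H.op m s).2))
      (by simp [seqStep, seqStepG, List.mem_range.mpr hi, hu, instrStep, hr])]
    exact ih
  | negF m hu hr h ih =>
    rename_i i s b s'
    have hi : i < x.length := (List.getElem?_eq_some_iff.mp hu).1
    rw [PFun.fix_fwd_eq (f := fun p => Part.some (seqStep x H.op p)) (a' := (i + 1, (H.op m s).2))
      (by simp [seqStep, seqStepG, List.mem_range.mpr hi, hu, instrStep, hr])]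
    exact ih
  | fjump l hu h ih =>
    rename_i i s b s'
    have hi : i < x.length := (List.getElem?_eq_some_iff.mp hu).1
    rw [PFun.fix_fwd_eq (f := fun p => Part.some (seqStep x H.op p)) (a' := (i + l, s))
      (by simp [seqStep, seqStepG, List.mem_range.mpr hi, hu, instrStep])]
    exact ih
  | bjump l hu hl h ih =>
    rename_i i s b s'
    have hi : i < x.length := (List.getElem?_eq_some_iff.mp hu).1
    rw [PFun.fix_fwd_eq (f := fun p => Part.some (seqStep x H.op p)) (a' := (i - l, s))
      (by simp [seqStep, seqStepG, List.mem_range.mpr hi, hu, instrStep, hl])]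
    exact ih
  | haltT hu =>
    rename_i i s
    have hi : i < x.length := (List.getElem?_eq_some_iff.mp hu).1
    exact PFun.fix_stop (by simp [seqStep, seqStepG, List.mem_range.mpr hi, hu, instrStep])
  | haltF hu =>
    rename_i i s
    have hi : i < x.length := (List.getElem?_eq_some_iff.mp hu).1
    exact PFun.fix_stop (by simp [seqStep, seqStepG, List.mem_range.mpr hi, hu, instrStep])

/-- If `H ≤ H'` and `H'` is computable, then `H` is computable. -/
theorem computable_of_le (H H' : FU ℕ) (hle : FU.le H H')
    (h : ComputableFU H') : ComputableFU H := by
  intro m M hmM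
  obtain ⟨x, hx, hexec⟩ := hle m M hmM
  -- the operation function of H' is computable on its interface
  have hop : ∀ m ∈ H'.iface, Computable (H'.op m) := by
    intro m hm
    have hmem : (m, hm.choose) ∈ H'.carrier := hm.choose_spec
    have hcmo := h m _ hmem
    have heq : H'.op m = hm.choose := by
      funext s
      simp only [FU.op]
      exact dif_pos hm
    rw [heq]
    have : Computable (fun s => ((hm.choose s).1, (hm.choose s).2)) :=
      hcmo.1.pair hcmo.2
    simpa using this
  have hstep : Computable (seqStep x H'.op) := by
    apply seqStep_computable
    intro u hu m hcase
    have hn := hx.2 u hu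
    rcases hcase with rfl | rfl | rfl <;> exact hop m hn
  have hfix : Partrec (fun s : ℕ =>
      PFun.fix (fun p => Part.some (seqStep x H'.op p)) (0, s)) :=
    (Partrec.fix hstep.partrec).comp ((Computable.const 0).pair Computable.id)
  have hMc : Computable M := by
    have : Partrec (fun s : ℕ => Part.some (M s)) := by
      apply hfix.of_eq
      intro s
      apply Part.eq_some_iff.mpr
      have := exec_fix (hexec s)
      simpa using this
    exact this
  exact ⟨Computable.fst.comp hMc, Computable.snd.comp hMc⟩
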